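/- Let G be a group, K ⊆ G a subgroup which is a compact Hausdorff topological group with normalized Haar probability measure μ_K, H a complex Hilbert space, and π a group homomorphism from G to the unitary operators on H such that for every w ∈ H the map K → H, k ↦ π(k)w, is continuous. Let v ∈ H be a unit vector with π(k)v = v for all k ∈ K, and assume every K-invariant vector is a scalar multiple of v (i.e., if w ∈ H satisfies π(k)w = w for all k ∈ K, then w = c·v for some c ∈ ℂ). Then the matrix coefficient s ↦ ⟨π(s)v, v⟩ satisfies the spherical identity: for all s, t ∈ G, ∫_K ⟨π(s k t)v, v⟩ dμ_K(k) = ⟨π(s)v, v⟩ · ⟨π(t)v, v⟩. -/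

import Mathlib

open MeasureTheory
open scoped InnerProductSpace

/-- Let `π` be a unitary representation of a group `G` on a complex Hilbert space `H`,
`K ≤ G` a subgroup which is a compact Hausdorff topological group with normalized Haar
probability measure `μ_K`, such that `k ↦ π(k)w` is continuous on `K` for every `w`.
If `v` is a `K`-fixed unit vector and every `K`-fixed vector is a multiple of `v`, then
the matrix coefficient `s ↦ ⟨π(s)v, v⟩` satisfies the spherical identity
`∫_K ⟨π(s k t)v, v⟩ dμ_K(k) = ⟨π(s)v, v⟩·⟨π(t)v, v⟩`. -/
theorem statement14 {G : Type*} [Group G]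
    {H : Type*} [NormedAddCommGroup H] [InnerProductSpace ℂ H] [CompleteSpace H]
    (K : Subgroup G)
    [TopologicalSpace K] [IsTopologicalGroup K] [CompactSpace K] [T2Space K]
    [MeasurableSpace K] [BorelSpace K]
    (μK : Measure K) [IsProbabilityMeasure μK] [μK.IsMulLeftInvariant]
    (π : G →* (H ≃ₗᵢ[ℂ] H))
    (hcont : ∀ w : H, Continuous fun k : K => π (k : G) w)
    (v : H) (hv : ‖v‖ = 1)
    (hfix : ∀ k ∈ K, π k v = v)
    (huniq : ∀ w : H, (∀ k ∈ K, π k w = w) → ∃ c : ℂ, w = c • v)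
    (s t : G) :
    ∫ k : K, ⟪π (s * (k : G) * t) v, v⟫_ℂ ∂μK = ⟪π s v, v⟫_ℂ * ⟪π t v, v⟫_ℂ := by
  -- the continuous linear map version of π g
  set φ : G → H →L[ℂ] H := fun g =>
    ((π g).toContinuousLinearEquiv : H →L[ℂ] H) with hφ
  have hφ_apply : ∀ g (x : H), φ g x = π g x := fun g x => rfl
  set f : K → H := fun k => π (k : G) (π t v) with hf
  have hfcont : Continuous f := hcont (π t v)
  have hfint : Integrable f μK := hfcont.integrable_of_hasCompactSupport
    (HasCompactSupport.of_compactSpace f)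
  set w : H := ∫ k, f k ∂μK with hw
  -- w is K-invariant
  have hinv : ∀ k ∈ K, π k w = w := by
    intro k hk
    have h1 : π k w = φ k w := rfl
    rw [h1, hw, ← ContinuousLinearMap.integral_comp_comm _ hfint]
    have h2 : ∀ k' : K, φ k (f k') = f (⟨k, hk⟩ * k') := by
      intro k'
      show π k (π (k' : G) (π t v)) = π ((⟨k, hk⟩ * k' : K) : G) (π t v)
      have : ((⟨k, hk⟩ * k' : K) : G) = k * (k' : G) := rfl
      rw [this, map_mul]
      rfl
    simp_rw [h2]
    exact integral_mul_left_eq_self (fun k' => f k') (⟨k, hk⟩ : K)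
  obtain ⟨c, hc⟩ := huniq w hinv
  -- inner product preservation
  have hinner : ∀ (g : G) (x y : H), ⟪π g x, π g y⟫_ℂ = ⟪x, y⟫_ℂ := fun g x y =>
    (π g).inner_map_map x y
  -- ⟪w, v⟫ = ⟪π t v, v⟫
  have hwv : ⟪v, w⟫_ℂ = ⟪v, π t v⟫_ℂ := by
    rw [hw, ← integral_inner hfint]
    have : ∀ k : K, ⟪v, f k⟫_ℂ = ⟪v, π t v⟫_ℂ := by
      intro k
      have := hinner (k : G) v (π t v)
      rw [hfix _ k.2] at this
      exact this.symm ▸ rfl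
    simp_rw [this]
    simp
  have hvv : ⟪v, v⟫_ℂ = 1 := by
    rw [inner_self_eq_norm_sq_to_K, hv]; norm_num
  have hcval : c = ⟪v, π t v⟫_ℂ := by
    rw [← hwv, hc, inner_smul_right, hvv, mul_one]
  -- LHS computation
  have hLHS : ∀ k : K, ⟪π (s * (k : G) * t) v, v⟫_ℂ = ⟪π s (f k), v⟫_ℂ := by
    intro k
    congr 1
    rw [map_mul, map_mul]
    rfl
  simp_rw [hLHS]
  have hconj : ∀ x : H, ⟪π s x, v⟫_ℂ = (starRingEnd ℂ) ⟪v, π s x⟫_ℂ := fun x =>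
    (inner_conj_symm _ _).symm
  simp_rw [hconj]
  rw [integral_conj]
  have hsint : Integrable (fun k => π s (f k)) μK := by
    have : (fun k => π s (f k)) = fun k => φ s (f k) := rfl
    rw [this]
    exact (φ s).integrable_comp hfint
  have h3 : ∫ k, ⟪v, π s (f k)⟫_ℂ ∂μK = ⟪v, π s w⟫_ℂ := by
    rw [integral_inner hsint]
    congr 1
    have : (fun k => π s (f k)) = fun k => φ s (f k) := rfl
    rw [this, ContinuousLinearMap.integral_comp_comm _ hfint]
    rfl
  rw [h3, hc, (π s).map_smul, inner_smul_right, map_mul, hcval, inner_conj_symm,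
    inner_conj_symm]
  ring
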